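/- Let n ≥ 1, X = {1,...,n}, and let f : X → ℝ be a non-negative nondecreasing function with √(f(n)) − √(f(1)) = R. Then for every D ∈ {1,...,n} there exist a partition (I_1,...,I_K) of X into K ≤ D intervals of consecutive integers and a function g = Σ_{k=1}^K β_k 1_{I_k} (with real constants β_k) such that Σ_{i=1}^n ( √(f(i)) − √(g(i)) )² ≤ n R² / D². -/

import Mathlib

open Real

/-- **Lemma `monotone`: piecewise-constant approximation of a monotone function.**
Let `f : {1,…,n} → ℝ` be non-negative and nondecreasing with `√(f n) − √(f 1) = R`.
For every `D ∈ {1,…,n}` there is a partition of `{1,…,n}` into `K ≤ D` intervals of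
consecutive integers (given by boundaries `0 = j₀ < j₁ < … < j_K = n`) and a piecewise
constant function `g = ∑ β_k 1_{I_k}` such that
`∑ᵢ (√(f i) − √(g i))² ≤ n R² / D²`. -/
theorem statement11
    (n : ℕ) (hn : 1 ≤ n) (f : Fin n → ℝ)
    (hpos : ∀ i, 0 ≤ f i) (hmono : Monotone f) (R : ℝ)
    (hR : Real.sqrt (f ⟨n - 1, by omega⟩) - Real.sqrt (f ⟨0, by omega⟩) = R) :
    ∀ D : ℕ, 1 ≤ D → D ≤ n →
      ∃ (K : ℕ) (_ : 1 ≤ K) (_ : K ≤ D) (j : Fin (K + 1) → ℕ) (β : Fin K → ℝ)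
        (g : Fin n → ℝ),
        j 0 = 0 ∧ j (Fin.last K) = n ∧ StrictMono j ∧
        (∀ (k : Fin K) (i : Fin n),
          j k.castSucc ≤ (i : ℕ) → (i : ℕ) < j k.succ → g i = β k) ∧
        ∑ i, (Real.sqrt (f i) - Real.sqrt (g i)) ^ 2 ≤ n * R ^ 2 / D ^ 2 := by
  classical
  intro D hD1 hDn
  set s' : ℕ → ℝ := fun m => Real.sqrt (f ⟨min m (n-1), by omega⟩) with hs'def
  have hs'mono : Monotone s' := by
    intro a b hab
    exact Real.sqrt_le_sqrt (hmono (by simp [Fin.mk_le_mk]; omega))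
  have hs'eq : ∀ i : Fin n, Real.sqrt (f i) = s' i := by
    intro i
    have : (⟨min (i:ℕ) (n-1), by omega⟩ : Fin n) = i := by
      ext; simp; omega
    simp [hs'def, this]
  have hR0 : 0 ≤ R := by
    rw [← hR]
    have := Real.sqrt_le_sqrt (hmono (show (⟨0, by omega⟩ : Fin n) ≤ ⟨n-1, by omega⟩ by
      simp [Fin.mk_le_mk]))
    linarith
  set ε : ℝ := R / D with hεdef
  have hε0 : 0 ≤ ε := div_nonneg hR0 (by positivity)
  have htop : s' (n-1) = s' 0 + D * ε := by
    have h1 : s' (n-1) = Real.sqrt (f ⟨n-1, by omega⟩) := by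
      simp [hs'def]
    have h2 : s' 0 = Real.sqrt (f ⟨0, by omega⟩) := by
      simp [hs'def]
    have hD : (D:ℝ) ≠ 0 := by positivity
    field_simp [hεdef]
    rw [h1, h2]; linarith [show (D:ℝ) * ε = R by rw [hεdef]; field_simp]
  set c : ℕ → ℕ := fun k => if k < D then sInf {m | n ≤ m ∨ s' 0 + k * ε ≤ s' m} else n
    with hcdef
  have hsetne : ∀ k : ℕ, n ∈ {m | n ≤ m ∨ s' 0 + k * ε ≤ s' m} := fun k => Or.inl le_rfl
  have hcle : ∀ k, c k ≤ n := by
    intro k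
    simp only [hcdef]
    split
    · exact Nat.sInf_le (hsetne k)
    · exact le_rfl
  have hc0 : c 0 = 0 := by
    have h0 : 0 ∈ {m | n ≤ m ∨ s' 0 + (0:ℕ) * ε ≤ s' m} := by
      right; simp
    have hle : c 0 ≤ 0 := by
      simp only [hcdef]
      rw [if_pos (show 0 < D by omega)]
      exact Nat.sInf_le h0
    omega
  have hcD : c D = n := by simp [hcdef]
  have hcmono : Monotone c := by
    intro k k' hkk'
    simp only [hcdef]
    split <;> split
    · -- both < D
      rename_i h1 h2
      apply Nat.sInf_le
      have hmem := Nat.sInf_mem ⟨n, hsetne k'⟩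
      rcases hmem with h | h
      · exact Or.inl h
      · refine Or.inr (le_trans ?_ h)
        have : (k:ℝ) ≤ k' := by exact_mod_cast hkk'
        nlinarith
    · rename_i h1 h2
      exact le_trans (Nat.sInf_le (hsetne k)) le_rfl
    · omega
    · exact le_rfl
  -- key lemma
  have key : ∀ a b : ℕ, a ≤ b → b < n → (∀ k, k ≤ D → ¬(a < c k ∧ c k ≤ b)) →
      s' b ≤ s' a + ε := by
    intro a b hab hbn hno
    set P : ℕ → Prop := fun k => c k ≤ a with hPdef
    have hP0 : P 0 := by simp [hPdef, hc0]
    set k₀ := Nat.findGreatest P D with hk₀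
    have hk₀le : k₀ ≤ D := Nat.findGreatest_le D
    have hPk₀ : P k₀ := Nat.findGreatest_spec (Nat.zero_le D) hP0
    have hk₀lt : k₀ < D := by
      rcases lt_or_eq_of_le hk₀le with h | h
      · exact h
      · exfalso
        have : c D ≤ a := h ▸ hPk₀
        rw [hcD] at this; omega
    have hnext : a < c (k₀ + 1) := by
      by_contra h
      exact Nat.findGreatest_is_greatest (Nat.lt_succ_self k₀) (by omega) (by
        simpa [hPdef] using Nat.not_lt.mp h)
    have hnextb : b < c (k₀ + 1) := by
      by_contra h
      exact hno (k₀+1) (by omega) ⟨hnext, Nat.not_lt.mp h⟩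
    -- lower bound for s' a
    have hla : s' 0 + k₀ * ε ≤ s' a := by
      have hck₀ : c k₀ = sInf {m | n ≤ m ∨ s' 0 + k₀ * ε ≤ s' m} := by
        simp [hcdef, hk₀lt]
      have hmem := Nat.sInf_mem ⟨n, hsetne k₀⟩
      rw [← hck₀] at hmem
      rcases hmem with h | h
      · exfalso; have := hPk₀; simp only [hPdef] at this; omega
      · exact le_trans h (hs'mono hPk₀)
    -- upper bound for s' b
    have hub : s' b ≤ s' 0 + (k₀ + 1) * ε := by
      rcases lt_or_eq_of_le (show k₀ + 1 ≤ D by omega) with h | h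
      · have hc' : c (k₀+1) = sInf {m | n ≤ m ∨ s' 0 + (↑(k₀+1)) * ε ≤ s' m} := by
          simp [hcdef, h]
        rw [hc'] at hnextb
        have := Nat.notMem_of_lt_sInf hnextb
        simp only [Set.mem_setOf_eq, not_or, not_le] at this
        push_cast at this
        linarith [this.2]
      · have h1 : s' b ≤ s' (n-1) := hs'mono (by omega)
        rw [htop] at h1
        have : ((k₀:ℝ) + 1) = (D:ℝ) := by exact_mod_cast congrArg Nat.cast h
        rw [← this] at h1
        exact h1
    push_cast at hub
    linarith
  -- build the finite set of boundaries
  set S : Finset ℕ := (Finset.range (D+1)).image c with hSdef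
  have h0S : 0 ∈ S := by
    rw [hSdef]; exact Finset.mem_image.mpr ⟨0, Finset.mem_range.mpr (by omega), hc0⟩
  have hnS : n ∈ S := by
    rw [hSdef]; exact Finset.mem_image.mpr ⟨D, Finset.mem_range.mpr (by omega), hcD⟩
  have hSle : ∀ x ∈ S, x ≤ n := by
    intro x hx
    rw [hSdef] at hx
    obtain ⟨k, _, rfl⟩ := Finset.mem_image.mp hx
    exact hcle k
  have hcardle : S.card ≤ D + 1 :=
    le_trans Finset.card_image_le (by simp)
  have hcardge : 2 ≤ S.card := by
    have hsub : ({0, n} : Finset ℕ) ⊆ S := by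
      intro x hx
      simp only [Finset.mem_insert, Finset.mem_singleton] at hx
      rcases hx with rfl | rfl
      · exact h0S
      · exact hnS
    have : ({0, n} : Finset ℕ).card = 2 := by
      rw [Finset.card_insert_of_notMem (by simp; omega), Finset.card_singleton]
    have h2 := Finset.card_le_card hsub
    omega
  set K := S.card - 1 with hKdef
  have hKcard : S.card = K + 1 := by omega
  have hK1 : 1 ≤ K := by omega
  have hKD : K ≤ D := by omega

  set e := S.orderIsoOfFin hKcard with hedef
  set j : Fin (K+1) → ℕ := fun m => (e m : ℕ) with hjdef
  have hjS : ∀ m, j m ∈ S := fun m => (e m).2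
  have hjstrict : StrictMono j := fun a b h => by
    exact_mod_cast e.strictMono h
  have hjsurj : ∀ x ∈ S, ∃ m, j m = x := by
    intro x hx
    exact ⟨e.symm ⟨x, hx⟩, by simp [hjdef]⟩
  have hj0 : j 0 = 0 := by
    obtain ⟨m, hm⟩ := hjsurj 0 h0S
    have := hjstrict.monotone (show (0 : Fin (K+1)) ≤ m from Fin.zero_le m)
    omega
  have hjlast : j (Fin.last K) = n := by
    obtain ⟨m, hm⟩ := hjsurj n hnS
    have h1 := hjstrict.monotone (Fin.le_last m)
    have h2 := hSle _ (hjS (Fin.last K))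
    omega
  -- largest boundary ≤ i
  have hfilne : ∀ i : Fin n, (S.filter (fun x => x ≤ (i:ℕ))).Nonempty := by
    intro i
    exact ⟨0, Finset.mem_filter.mpr ⟨h0S, Nat.zero_le _⟩⟩
  set L : Fin n → ℕ := fun i => (S.filter (fun x => x ≤ (i:ℕ))).max' (hfilne i) with hLdef
  have hLmem : ∀ i : Fin n, L i ∈ S ∧ L i ≤ (i:ℕ) := by
    intro i
    have := (S.filter (fun x => x ≤ (i:ℕ))).max'_mem (hfilne i)
    exact Finset.mem_filter.mp this
  have hLmax : ∀ (i : Fin n) (x : ℕ), x ∈ S → x ≤ (i:ℕ) → x ≤ L i := by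
    intro i x hx hxi
    have hmem : x ∈ S.filter (fun y => y ≤ (i:ℕ)) := Finset.mem_filter.mpr ⟨hx, hxi⟩
    simp only [hLdef]
    exact Finset.le_max' _ _ hmem
  set g : Fin n → ℝ := fun i => f ⟨min (L i) (n-1), by omega⟩ with hgdef
  set β : Fin K → ℝ := fun k => f ⟨min (j k.castSucc) (n-1), by omega⟩ with hβdef
  refine ⟨K, hK1, hKD, j, β, g, hj0, hjlast, hjstrict, ?_, ?_⟩
  · -- piecewise condition
    intro k i hki hik
    have hLeq : L i = j k.castSucc := by
      have h1 : j k.castSucc ≤ L i := hLmax i _ (hjS _) hki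
      have h2 : L i ≤ j k.castSucc := by
        obtain ⟨m, hm⟩ := hjsurj (L i) (hLmem i).1
        have hLi := (hLmem i).2
        have hmlt : j m < j k.succ := by omega
        have hmm : m < k.succ := hjstrict.lt_iff_lt.mp hmlt
        have hmle : m ≤ k.castSucc := by
          rw [Fin.le_def, Fin.coe_castSucc]
          have h3 := Fin.lt_iff_val_lt_val.mp hmm
          simp only [Fin.val_succ] at h3
          omega
        have := hjstrict.monotone hmle
        omega
      omega
    simp [hgdef, hβdef, hLeq]
  · -- the sum bound
    have hterm : ∀ i : Fin n, (Real.sqrt (f i) - Real.sqrt (g i))^2 ≤ ε^2 := by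
      intro i
      have hgi : Real.sqrt (g i) = s' (L i) := by simp [hgdef, hs'def]
      rw [hs'eq i, hgi]
      have hlow : s' (L i) ≤ s' (i:ℕ) := hs'mono (hLmem i).2
      have hup : s' (i:ℕ) ≤ s' (L i) + ε := by
        apply key (L i) i (hLmem i).2 i.2
        intro k hk hcon
        have hcS : c k ∈ S := by
          rw [hSdef]; exact Finset.mem_image.mpr ⟨k, Finset.mem_range.mpr (by omega), rfl⟩
        have := hLmax i (c k) hcS hcon.2
        omega
      nlinarith
    calc ∑ i, (Real.sqrt (f i) - Real.sqrt (g i)) ^ 2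
        ≤ ∑ _i : Fin n, ε^2 := Finset.sum_le_sum (fun i _ => hterm i)
      _ = n * ε^2 := by simp [mul_comm]
      _ = n * R^2 / D^2 := by
          rw [hεdef, div_pow]; ring
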